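/- Let r > 0 and 0 < τ < 2π. Then { A(τ,c) : c ∈ ℝ } ∩ { exp(t·τ₂) : t ∈ ℝ } = { I, −I }, where I is the 2×2 identity matrix and exp denotes the exponential of 2×2 complex matrices. -/

import Mathlib

open Matrix

/-- The matrix `τ₂ = [[0, −1], [1, 0]]`. -/
noncomputable def tau2 : Matrix (Fin 2) (Fin 2) ℂ := !![0, -1; 1, 0]

/-- The matrix `A(τ,c)` (for the parameter `r`), with `β_c = √(c²r² + 1/4)`. -/
noncomputable def Amat (r τ c : ℝ) : Matrix (Fin 2) (Fin 2) ℂ :=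
  !![(Real.cos (Real.sqrt (c^2*r^2 + 1/4) * τ) : ℂ)
        + (Complex.I / (2 * (Real.sqrt (c^2*r^2 + 1/4) : ℂ)))
          * (Real.sin (Real.sqrt (c^2*r^2 + 1/4) * τ) : ℂ),
      ((c * r / Real.sqrt (c^2*r^2 + 1/4)) * Real.sin (Real.sqrt (c^2*r^2 + 1/4) * τ) : ℝ);
    -(((c * r / Real.sqrt (c^2*r^2 + 1/4)) * Real.sin (Real.sqrt (c^2*r^2 + 1/4) * τ) : ℝ) : ℂ),
      (Real.cos (Real.sqrt (c^2*r^2 + 1/4) * τ) : ℂ)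
        - (Complex.I / (2 * (Real.sqrt (c^2*r^2 + 1/4) : ℂ)))
          * (Real.sin (Real.sqrt (c^2*r^2 + 1/4) * τ) : ℂ)]

/-- The ring hom `ℂ →+* Matrix (Fin 2) (Fin 2) ℂ`, `a + b i ↦ a•1 + b•tau2`. -/
noncomputable def phi : ℂ →+* Matrix (Fin 2) (Fin 2) ℂ where
  toFun z := !![(z.re : ℂ), (-z.im : ℝ); (z.im : ℝ), (z.re : ℝ)]
  map_one' := by ext i j; fin_cases i <;> fin_cases j <;> simp [Matrix.one_fin_two]
  map_mul' z w := by
    ext i j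
    fin_cases i <;> fin_cases j <;>
      simp [Matrix.mul_fin_two, Complex.ext_iff] <;> push_cast <;> ring
  map_zero' := by ext i j; fin_cases i <;> fin_cases j <;> simp
  map_add' z w := by
    ext i j
    fin_cases i <;> fin_cases j <;> simp <;> push_cast <;> ring

section
attribute [local instance] Matrix.linftyOpNormedRing Matrix.linftyOpNormedAlgebra

lemma phi_continuous : Continuous phi := by
  refine continuous_matrix fun i j => ?_
  fin_cases i <;> fin_cases j <;> simp [phi] <;> fun_prop

lemma exp_tau2 (t : ℝ) :
    NormedSpace.exp ((t : ℂ) • tau2)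
      = !![(Real.cos t : ℂ), (-Real.sin t : ℝ); (Real.sin t : ℝ), (Real.cos t : ℝ)] := by
  have h1 : ((t : ℂ) • tau2) = phi (t * Complex.I) := by
    ext i j
    fin_cases i <;> fin_cases j <;> simp [tau2, phi]
  rw [h1]
  refine (NormedSpace.map_exp phi phi_continuous _).symm.trans ?_
  rw [← Complex.exp_eq_exp_ℂ,
    Complex.exp_mul_I]
  ext i j
  fin_cases i <;> fin_cases j <;>
    simp [phi, Complex.cos_ofReal_re, Complex.sin_ofReal_re]

end

lemma sqrt_eq_aux (r b : ℝ) (hr : 0 < r) (hb : 1/2 ≤ b) :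
    Real.sqrt ((Real.sqrt (b^2 - 1/4) / r)^2 * r^2 + 1/4) = b := by
  have hnn : 0 ≤ b^2 - 1/4 := by nlinarith
  have h1 : (Real.sqrt (b^2 - 1/4) / r)^2 * r^2 = b^2 - 1/4 := by
    rw [div_pow, Real.sq_sqrt hnn]
    field_simp
  rw [h1]
  have : b^2 - 1/4 + 1/4 = b^2 := by ring
  rw [this, Real.sqrt_sq (by linarith)]

/-- For `r > 0` and `0 < τ < 2π`,
`{A(τ,c) : c ∈ ℝ} ∩ {exp(t·τ₂) : t ∈ ℝ} = {I, −I}`. -/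
theorem statement15 (r τ : ℝ) (hr : 0 < r) (hτ : 0 < τ) (hτ' : τ < 2 * Real.pi) :
    (Set.range fun c : ℝ => Amat r τ c) ∩
        (Set.range fun t : ℝ => NormedSpace.exp ((t : ℂ) • tau2))
      = {(1 : Matrix (Fin 2) (Fin 2) ℂ), (-1 : Matrix (Fin 2) (Fin 2) ℂ)} := by
  have hπ := Real.pi_pos
  ext A
  simp only [Set.mem_inter_iff, Set.mem_range, Set.mem_insert_iff, Set.mem_singleton_iff]
  constructor
  · rintro ⟨⟨c, rfl⟩, t, ht⟩
    rw [exp_tau2] at ht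
    set β := Real.sqrt (c^2*r^2 + 1/4) with hβdef
    have hβ : 0 < β := Real.sqrt_pos.2 (by positivity)
    have h00 : (Real.cos t : ℂ) = Amat r τ c 0 0 := by rw [← ht]; simp
    have h00' : (Real.cos t : ℂ)
        = (Real.cos (β*τ) : ℂ) + ((Real.sin (β*τ)/(2*β) : ℝ) : ℂ) * Complex.I := by
      rw [h00]
      unfold Amat
      simp only [Matrix.cons_val', Matrix.cons_val_zero, Matrix.empty_val',
        Matrix.cons_val_fin_one, Matrix.of_apply]
      rw [← hβdef]
      have hβ' : (β : ℂ) ≠ 0 := by exact_mod_cast hβ.ne'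
      push_cast
      field_simp
    have him := congrArg Complex.im h00'
    simp only [Complex.ofReal_im, Complex.add_im, Complex.mul_im, Complex.I_im,
      Complex.I_re, Complex.ofReal_re, mul_one, mul_zero, add_zero, zero_add] at him
    have hsin : Real.sin (β * τ) = 0 := by
      rcases div_eq_zero_iff.mp him.symm with h | h
      · exact h
      · linarith
    have hcos : Real.cos (β*τ) = 1 ∨ Real.cos (β*τ) = -1 := by
      have h := Real.sin_sq_add_cos_sq (β*τ)
      rw [hsin] at h
      have h1 : Real.cos (β*τ) * Real.cos (β*τ) = 1 := by nlinarith
      exact mul_self_eq_one_iff.mp h1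
    have hA : Amat r τ c = !![(Real.cos (β*τ) : ℂ), 0; 0, (Real.cos (β*τ) : ℂ)] := by
      unfold Amat
      rw [← hβdef, hsin]
      ext i j
      fin_cases i <;> fin_cases j <;> simp
    rcases hcos with hc | hc
    · left
      rw [hA, hc]
      ext i j
      fin_cases i <;> fin_cases j <;> simp [Matrix.one_fin_two]
    · right
      rw [hA, hc]
      ext i j
      fin_cases i <;> fin_cases j <;> simp [Matrix.one_fin_two]
  · have hamat : ∀ b : ℝ, 1/2 ≤ b →
        Amat r τ (Real.sqrt (b^2 - 1/4) / r) =
          !![(Real.cos (b*τ) : ℂ) + Complex.I / (2*(b:ℂ)) * (Real.sin (b*τ) : ℂ),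
              ((Real.sqrt (b^2-1/4)/r * r / b) * Real.sin (b*τ) : ℝ);
             -(((Real.sqrt (b^2-1/4)/r * r / b) * Real.sin (b*τ) : ℝ) : ℂ),
              (Real.cos (b*τ) : ℂ) - Complex.I / (2*(b:ℂ)) * (Real.sin (b*τ) : ℂ)] := by
      intro b hb
      have hs := sqrt_eq_aux r b hr hb
      simp only [Amat, hs]
    rintro (rfl | rfl)
    · constructor
      · refine ⟨Real.sqrt ((2*Real.pi/τ)^2 - 1/4) / r, ?_⟩
        have hb : 1/2 ≤ 2*Real.pi/τ := by
          rw [le_div_iff₀ hτ]; nlinarith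
        rw [hamat _ hb]
        have h1 : 2*Real.pi/τ*τ = 2*Real.pi := by field_simp
        rw [h1, Real.cos_two_pi, Real.sin_two_pi]
        ext i j
        fin_cases i <;> fin_cases j <;> simp [Matrix.one_fin_two]
      · exact ⟨0, by simp [NormedSpace.exp_zero]⟩
    · constructor
      · refine ⟨Real.sqrt ((Real.pi/τ)^2 - 1/4) / r, ?_⟩
        have hb : 1/2 ≤ Real.pi/τ := by
          rw [le_div_iff₀ hτ]; nlinarith
        rw [hamat _ hb]
        have h1 : Real.pi/τ*τ = Real.pi := by field_simp
        rw [h1, Real.cos_pi, Real.sin_pi]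
        ext i j
        fin_cases i <;> fin_cases j <;> simp [Matrix.one_fin_two]
      · refine ⟨Real.pi, ?_⟩
        rw [exp_tau2, Real.cos_pi, Real.sin_pi]
        ext i j
        fin_cases i <;> fin_cases j <;> simp [Matrix.one_fin_two]
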